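/- Let a, b be pseudo Drazin invertible elements of a Banach algebra A with ab = λ ba, λ ≠ 0. Then ab is pseudo Drazin invertible and (ab)^‡ = b^‡ a^‡ = λ^(−1) a^‡ b^‡. -/

import Mathlib

def MemJacobson {A : Type*} [Ring A] (x : A) : Prop := ∀ y : A, IsUnit (1 - y * x)

def IsPDrazinInv {A : Type*} [Ring A] (a b : A) : Prop :=
  a * b = b * a ∧ b * a * b = b ∧ ∃ k : ℕ, 1 ≤ k ∧ MemJacobson (a ^ k - a ^ (k + 1) * b)

section RingLemmas
variable {R : Type*} [Ring R]

/-- Jacobson's lemma. -/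
lemma isUnit_one_sub_swap {a b : R} (h : IsUnit (1 - a * b)) : IsUnit (1 - b * a) := by
  obtain ⟨u, hu⟩ := h
  set c : R := ↑u⁻¹ with hcdef
  have h1 : (1 - a * b) * c = 1 := by rw [← hu]; exact u.mul_inv
  have h2 : c * (1 - a * b) = 1 := by rw [← hu]; exact u.inv_mul
  have key1 : a * b * c = c - 1 := by
    have : c - a * b * c = 1 := by rw [← h1]; noncomm_ring
    rw [← this]; noncomm_ring
  have key2 : c * (a * b) = c - 1 := by
    have : c - c * (a * b) = 1 := by rw [← h2]; noncomm_ring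
    rw [← this]; noncomm_ring
  refine ⟨⟨1 - b * a, 1 + b * c * a, ?_, ?_⟩, rfl⟩
  · calc (1 - b * a) * (1 + b * c * a)
        = 1 + b * c * a - b * a - b * (a * b * c) * a := by noncomm_ring
      _ = 1 + b * c * a - b * a - b * (c - 1) * a := by rw [key1]
      _ = 1 := by noncomm_ring
  · calc (1 + b * c * a) * (1 - b * a)
        = 1 + b * c * a - b * a - b * (c * (a * b)) * a := by noncomm_ring
      _ = 1 + b * c * a - b * a - b * (c - 1) * a := by rw [key2]
      _ = 1 := by noncomm_ring

lemma memJ_mul_left {x : R} (z : R) (hx : MemJacobson x) : MemJacobson (z * x) := by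
  intro y
  have := hx (y * z)
  rwa [mul_assoc] at this

lemma memJ_mul_right {x : R} (z : R) (hx : MemJacobson x) : MemJacobson (x * z) := by
  intro y
  have h1 := hx (z * y)
  have h2 : IsUnit (1 - x * (z * y)) := isUnit_one_sub_swap h1
  have h3 : IsUnit (1 - x * z * y) := by rwa [mul_assoc]
  exact isUnit_one_sub_swap h3

lemma memJ_add {x x' : R} (hx : MemJacobson x) (hx' : MemJacobson x') :
    MemJacobson (x + x') := by
  intro y
  obtain ⟨u, hu⟩ := hx y
  have h2 := hx' (↑u⁻¹ * y)
  have huu : (u : R) * ↑u⁻¹ = 1 := u.mul_inv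
  have key : 1 - y * (x + x') = ↑u * (1 - ↑u⁻¹ * y * x') := by
    have e1 : (u : R) * (↑u⁻¹ * y * x') = y * x' := by
      rw [← mul_assoc, ← mul_assoc, huu, one_mul]
    rw [mul_sub, mul_one, e1, hu]
    noncomm_ring
  rw [key]
  exact u.isUnit.mul h2

end RingLemmas

section AlgLemmas
variable {A : Type*} [Ring A] [Algebra ℂ A]

lemma memJ_smul {x : A} (μ : ℂ) (hx : MemJacobson x) : MemJacobson (μ • x) := by
  intro y
  have := hx (μ • y)
  rwa [smul_mul_assoc, ← mul_smul_comm] at this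

lemma isUnit_smul_one {μ : ℂ} (hμ : μ ≠ 0) : IsUnit (μ • (1 : A)) := by
  rw [← Algebra.algebraMap_eq_smul_one]
  exact hμ.isUnit.map (algebraMap ℂ A)

lemma quasinilpotent_of_pow_memJ {n : A} {k : ℕ} (hk : 1 ≤ k)
    (hJ : MemJacobson (n ^ k)) {ρ : ℂ} (hρ : ρ ≠ 0) : IsUnit (ρ • (1 : A) - n) := by
  have hρk : ρ ^ k ≠ 0 := pow_ne_zero _ hρ
  have hu : IsUnit ((ρ ^ k) • (1 : A) - n ^ k) := by
    have h1 := hJ (((ρ ^ k)⁻¹) • (1 : A))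
    have e : (ρ ^ k) • (1 : A) - n ^ k
        = ((ρ ^ k) • (1 : A)) * (1 - (((ρ ^ k)⁻¹) • (1 : A)) * n ^ k) := by
      rw [mul_sub, mul_one]
      congr 1
      rw [smul_mul_assoc, one_mul, smul_mul_assoc, one_mul, smul_smul,
        mul_inv_cancel₀ hρk, one_smul]
    rw [e]
    exact (isUnit_smul_one hρk).mul h1
  have hc : Commute (ρ • (1 : A)) n := by
    simp only [Commute, SemiconjBy, smul_mul_assoc, one_mul, mul_smul_comm, mul_one]
  have hpow : (ρ • (1 : A)) ^ k = (ρ ^ k) • 1 := by rw [smul_pow, one_pow]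
  set S : A := ∑ i ∈ Finset.range k, (ρ • (1 : A)) ^ i * n ^ (k - 1 - i) with hS
  have hSd : S * ((ρ • (1 : A)) - n) = (ρ ^ k) • (1 : A) - n ^ k := by
    rw [← hpow]; exact hc.geom_sum₂_mul k
  have hdS : ((ρ • (1 : A)) - n) * S = (ρ ^ k) • (1 : A) - n ^ k := by
    rw [← hpow]; exact hc.mul_geom_sum₂ k
  obtain ⟨U, hU⟩ := hu
  have hd_z : (ρ • (1 : A) - n) * (S * ↑U⁻¹) = 1 := by
    rw [← mul_assoc, hdS, ← hU]; exact U.mul_inv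
  have hz'_d : (↑U⁻¹ * S) * (ρ • (1 : A) - n) = 1 := by
    rw [mul_assoc, hSd, ← hU]; exact U.inv_mul
  have hzz : (↑U⁻¹ * S : A) = S * ↑U⁻¹ := by
    calc (↑U⁻¹ * S : A) = (↑U⁻¹ * S) * ((ρ • (1 : A) - n) * (S * ↑U⁻¹)) := by
          rw [hd_z, mul_one]
      _ = ((↑U⁻¹ * S) * (ρ • (1 : A) - n)) * (S * ↑U⁻¹) := by simp only [mul_assoc]
      _ = S * ↑U⁻¹ := by rw [hz'_d, one_mul]
  exact ⟨⟨ρ • (1 : A) - n, S * ↑U⁻¹, hd_z, by rw [← hzz]; exact hz'_d⟩, rfl⟩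

end AlgLemmas
section Analytic
variable {A : Type*} [NormedRing A] [NormedAlgebra ℂ A] [CompleteSpace A]

open Filter ENNReal

lemma exists_pow_norm_lt_one {q : A} (hq : ∀ ρ : ℂ, ρ ≠ 0 → IsUnit (ρ • (1 : A) - q)) :
    ∃ m : ℕ, 1 ≤ m ∧ ‖q ^ m‖ < 1 := by
  have hspec : spectrum ℂ q ⊆ {0} := by
    intro z hz
    rw [spectrum.mem_iff] at hz
    by_contra hz0
    have hz0' : z ≠ 0 := by simpa using hz0
    exact hz (by rw [Algebra.algebraMap_eq_smul_one]; exact hq z hz0')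
  have hrad : spectralRadius ℂ q = 0 := by
    refine le_antisymm ?_ zero_le
    rw [spectralRadius]
    refine iSup₂_le fun z hz => ?_
    have hz0 : z = 0 := hspec hz
    simp [hz0]
  have ht := spectrum.pow_nnnorm_pow_one_div_tendsto_nhds_spectralRadius q
  rw [hrad] at ht
  have hev : ∀ᶠ m : ℕ in atTop, (‖q ^ m‖₊ : ℝ≥0∞) ^ (1 / (m : ℝ)) < 1 / 2 :=
    ht.eventually_lt_const (by norm_num)
  obtain ⟨m, hm, hm1⟩ := (hev.and (eventually_ge_atTop 1)).exists
  refine ⟨m, hm1, ?_⟩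
  have hm0 : (m : ℝ) ≠ 0 := by
    simpa using (Nat.one_le_iff_ne_zero.mp hm1)
  have half_lt : (‖q ^ m‖₊ : ℝ≥0∞) ^ (1 / (m : ℝ)) < 1 :=
    lt_trans hm (by norm_num)
  have key : (‖q ^ m‖₊ : ℝ≥0∞) < 1 := by
    have e : (‖q ^ m‖₊ : ℝ≥0∞) = ((‖q ^ m‖₊ : ℝ≥0∞) ^ (1 / (m : ℝ))) ^ (m : ℝ) := by
      rw [← ENNReal.rpow_mul, one_div, inv_mul_cancel₀ hm0, ENNReal.rpow_one]
    rw [e]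
    exact ENNReal.rpow_lt_one half_lt (by positivity)
  have : ‖q ^ m‖₊ < 1 := by exact_mod_cast key
  exact this

end Analytic
section Sandwich
variable {A : Type*} [NormedRing A] [NormedAlgebra ℂ A] [CompleteSpace A]

lemma scaled_quasinilpotent {n : A} (hn : ∀ ρ : ℂ, ρ ≠ 0 → IsUnit (ρ • (1 : A) - n))
    {c : ℂ} (hc : c ≠ 0) : ∀ ρ : ℂ, ρ ≠ 0 → IsUnit (ρ • (1 : A) - c • n) := by
  intro ρ hρ
  have h1 := hn (ρ / c) (div_ne_zero hρ hc)
  have h2 : IsUnit ((c • (1 : A)) * ((ρ / c) • (1 : A) - n)) := (isUnit_smul_one hc).mul h1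
  have e : (c • (1 : A)) * ((ρ / c) • (1 : A) - n) = ρ • (1 : A) - c • n := by
    rw [smul_mul_assoc, one_mul, smul_sub, smul_smul]
    congr 2
    field_simp
  rwa [e] at h2

lemma sandwich_left {n w x : A} {μ : ℂ}
    (hn : ∀ ρ : ℂ, ρ ≠ 0 → IsUnit (ρ • (1 : A) - n))
    (hx : x = μ • (n * x * w)) : x = 0 := by
  rcases eq_or_ne μ 0 with h0 | h0
  · rw [h0, zero_smul] at hx; exact hx
  set c : ℝ := ‖μ‖ * (‖w‖ + 1) with hc
  have hμpos : 0 < ‖μ‖ := norm_pos_iff.mpr h0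
  have hcpos : 0 < c := by positivity
  have hcne : ((c : ℝ) : ℂ) ≠ 0 := by exact_mod_cast hcpos.ne'
  obtain ⟨m, hm1, hm⟩ := exists_pow_norm_lt_one (scaled_quasinilpotent hn hcne)
  have hiter : ∀ j : ℕ, x = (μ ^ j) • (n ^ j * x * w ^ j) := by
    intro j
    induction j with
    | zero => simp
    | succ j ih =>
      calc x = μ • (n * x * w) := hx
        _ = μ • (n * ((μ ^ j) • (n ^ j * x * w ^ j)) * w) := by rw [← ih]
        _ = (μ ^ (j + 1)) • (n ^ (j + 1) * x * w ^ (j + 1)) := by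
            rw [mul_smul_comm, smul_mul_assoc, smul_smul, ← pow_succ']
            congr 1
            rw [pow_succ', pow_succ]
            simp only [mul_assoc]
  have hq_norm : ‖(((c : ℝ) : ℂ) • n) ^ m‖ = c ^ m * ‖n ^ m‖ := by
    rw [smul_pow, norm_smul, norm_pow, Complex.norm_real, Real.norm_of_nonneg hcpos.le]
  have hmw : ‖μ‖ ^ m * ‖w‖ ^ m ≤ c ^ m := by
    rw [← mul_pow]
    refine pow_le_pow_left₀ (by positivity) ?_ m
    nlinarith [norm_nonneg w, hμpos]
  have hxb : ‖x‖ ≤ ‖(((c : ℝ) : ℂ) • n) ^ m‖ * ‖x‖ := by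
    have h1 : ‖x‖ = ‖μ‖ ^ m * ‖n ^ m * x * w ^ m‖ := by
      conv_lhs => rw [hiter m]
      rw [norm_smul, norm_pow]
    have h2 : ‖n ^ m * x * w ^ m‖ ≤ ‖n ^ m‖ * ‖x‖ * ‖w‖ ^ m :=
      calc ‖n ^ m * x * w ^ m‖ ≤ ‖n ^ m * x‖ * ‖w ^ m‖ := norm_mul_le _ _
        _ ≤ ‖n ^ m‖ * ‖x‖ * ‖w‖ ^ m :=
            mul_le_mul (norm_mul_le _ _) (norm_pow_le' w hm1) (norm_nonneg _) (by positivity)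
    calc ‖x‖ = ‖μ‖ ^ m * ‖n ^ m * x * w ^ m‖ := h1
      _ ≤ ‖μ‖ ^ m * (‖n ^ m‖ * ‖x‖ * ‖w‖ ^ m) :=
          mul_le_mul_of_nonneg_left h2 (by positivity)
      _ = (‖μ‖ ^ m * ‖w‖ ^ m) * (‖n ^ m‖ * ‖x‖) := by ring
      _ ≤ c ^ m * (‖n ^ m‖ * ‖x‖) :=
          mul_le_mul_of_nonneg_right hmw (by positivity)
      _ = (c ^ m * ‖n ^ m‖) * ‖x‖ := by ring
      _ = ‖(((c : ℝ) : ℂ) • n) ^ m‖ * ‖x‖ := by rw [hq_norm]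
  rcases eq_or_ne x 0 with hx0 | hx0
  · exact hx0
  · exfalso
    have hxpos : 0 < ‖x‖ := norm_pos_iff.mpr hx0
    nlinarith [hxb, hm, hxpos, norm_nonneg ((((c : ℝ) : ℂ) • n) ^ m)]

lemma sandwich_right {n w x : A} {μ : ℂ}
    (hn : ∀ ρ : ℂ, ρ ≠ 0 → IsUnit (ρ • (1 : A) - n))
    (hx : x = μ • (w * x * n)) : x = 0 := by
  rcases eq_or_ne μ 0 with h0 | h0
  · rw [h0, zero_smul] at hx; exact hx
  set c : ℝ := ‖μ‖ * (‖w‖ + 1) with hc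
  have hμpos : 0 < ‖μ‖ := norm_pos_iff.mpr h0
  have hcpos : 0 < c := by positivity
  have hcne : ((c : ℝ) : ℂ) ≠ 0 := by exact_mod_cast hcpos.ne'
  obtain ⟨m, hm1, hm⟩ := exists_pow_norm_lt_one (scaled_quasinilpotent hn hcne)
  have hiter : ∀ j : ℕ, x = (μ ^ j) • (w ^ j * x * n ^ j) := by
    intro j
    induction j with
    | zero => simp
    | succ j ih =>
      calc x = μ • (w * x * n) := hx
        _ = μ • (w * ((μ ^ j) • (w ^ j * x * n ^ j)) * n) := by rw [← ih]
        _ = (μ ^ (j + 1)) • (w ^ (j + 1) * x * n ^ (j + 1)) := by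
            rw [mul_smul_comm, smul_mul_assoc, smul_smul, ← pow_succ']
            congr 1
            rw [pow_succ', pow_succ]
            simp only [mul_assoc]
  have hq_norm : ‖(((c : ℝ) : ℂ) • n) ^ m‖ = c ^ m * ‖n ^ m‖ := by
    rw [smul_pow, norm_smul, norm_pow, Complex.norm_real, Real.norm_of_nonneg hcpos.le]
  have hmw : ‖μ‖ ^ m * ‖w‖ ^ m ≤ c ^ m := by
    rw [← mul_pow]
    refine pow_le_pow_left₀ (by positivity) ?_ m
    nlinarith [norm_nonneg w, hμpos]
  have hxb : ‖x‖ ≤ ‖(((c : ℝ) : ℂ) • n) ^ m‖ * ‖x‖ := by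
    have h1 : ‖x‖ = ‖μ‖ ^ m * ‖w ^ m * x * n ^ m‖ := by
      conv_lhs => rw [hiter m]
      rw [norm_smul, norm_pow]
    have h2 : ‖w ^ m * x * n ^ m‖ ≤ ‖w‖ ^ m * ‖x‖ * ‖n ^ m‖ :=
      calc ‖w ^ m * x * n ^ m‖ ≤ ‖w ^ m * x‖ * ‖n ^ m‖ := norm_mul_le _ _
        _ ≤ ‖w‖ ^ m * ‖x‖ * ‖n ^ m‖ := by
            refine mul_le_mul_of_nonneg_right ?_ (norm_nonneg _)
            exact le_trans (norm_mul_le _ _)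
              (mul_le_mul_of_nonneg_right (norm_pow_le' w hm1) (norm_nonneg _))
    calc ‖x‖ = ‖μ‖ ^ m * ‖w ^ m * x * n ^ m‖ := h1
      _ ≤ ‖μ‖ ^ m * (‖w‖ ^ m * ‖x‖ * ‖n ^ m‖) :=
          mul_le_mul_of_nonneg_left h2 (by positivity)
      _ = (‖μ‖ ^ m * ‖w‖ ^ m) * (‖n ^ m‖ * ‖x‖) := by ring
      _ ≤ c ^ m * (‖n ^ m‖ * ‖x‖) :=
          mul_le_mul_of_nonneg_right hmw (by positivity)
      _ = (c ^ m * ‖n ^ m‖) * ‖x‖ := by ring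
      _ = ‖(((c : ℝ) : ℂ) • n) ^ m‖ * ‖x‖ := by rw [hq_norm]
  rcases eq_or_ne x 0 with hx0 | hx0
  · exact hx0
  · exfalso
    have hxpos : 0 < ‖x‖ := norm_pos_iff.mpr hx0
    nlinarith [hxb, hm, hxpos, norm_nonneg ((((c : ℝ) : ℂ) • n) ^ m)]

end Sandwich
section Key
variable {A : Type*} [NormedRing A] [NormedAlgebra ℂ A] [CompleteSpace A]

lemma key_commute {b bd a : A} {μ : ℂ} (hμ : μ ≠ 0)
    (hb : IsPDrazinInv b bd) (h : a * b = μ • (b * a)) :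
    bd * a = μ • (a * bd) := by
  obtain ⟨hc, hbdb, k, hk, hJ⟩ := hb
  set e : A := b * bd with he
  have e_bd : e * bd = bd := by rw [hc]; exact hbdb
  have bd_e : bd * e = bd := by rw [he, ← mul_assoc]; exact hbdb
  have eb : e * b = b * e := by rw [he, mul_assoc, ← hc, ← he]
  have ee : e * e = e := by rw [he, mul_assoc, ← mul_assoc bd b bd, hbdb]
  have bdb_e : bd * b = e := hc.symm
  set f : A := 1 - e with hf
  set n : A := b - b * e with hn
  have nb : n = b * f := by rw [hn, hf, mul_sub, mul_one]
  have n_eq : n = f * b := by rw [hn, hf, sub_mul, one_mul, eb]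
  have ef0 : e * f = 0 := by rw [hf, mul_sub, mul_one, ee, sub_self]
  have fe0 : f * e = 0 := by rw [hf, sub_mul, one_mul, ee, sub_self]
  have ne0 : n * e = 0 := by rw [nb, mul_assoc, fe0, mul_zero]
  have en0 : e * n = 0 := by rw [n_eq, ← mul_assoc, ef0, zero_mul]
  have nf : n * f = n := by rw [hf, mul_sub, mul_one, ne0, sub_zero]
  have fn : f * n = n := by rw [hf, sub_mul, one_mul, en0, sub_zero]
  have npow : n ^ k = b ^ k - b ^ (k + 1) * bd := by
    have hbf : Commute b f := by
      rw [hf]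
      exact (Commute.one_right b).sub_right (by rw [Commute]; exact eb.symm)
    have hff : f * f = f := by
      rw [hf]; rw [sub_mul, one_mul, ← hf, ef0, sub_zero]
    have hfpow : ∀ j : ℕ, 1 ≤ j → f ^ j = f := by
      intro j hj
      induction j with
      | zero => omega
      | succ j ih =>
        rcases Nat.eq_or_lt_of_le hj with h1 | h1
        · rw [← h1, pow_one]
        · rw [pow_succ, ih (by omega), hff]
    rw [nb, hbf.mul_pow, hfpow k hk, hf, mul_sub, mul_one, he, ← mul_assoc, ← pow_succ]
  have hqn : ∀ ρ : ℂ, ρ ≠ 0 → IsUnit (ρ • (1 : A) - n) := by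
    intro ρ hρ
    refine quasinilpotent_of_pow_memJ hk ?_ hρ
    rw [npow]; exact hJ
  have hba : b * a = μ⁻¹ • (a * b) := by
    rw [h, smul_smul, inv_mul_cancel₀ hμ, one_smul]
  -- x := f * (a * e) is zero
  have hx0 : f * (a * e) = 0 := by
    refine sandwich_left (μ := μ) (w := bd) hqn ?_
    have step : n * (f * (a * e)) * bd = μ⁻¹ • (f * (a * e)) := by
      calc n * (f * (a * e)) * bd = ((n * f) * (a * e)) * bd := by simp only [mul_assoc]
        _ = (n * (a * e)) * bd := by rw [nf]
        _ = n * (a * (e * bd)) := by simp only [mul_assoc]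
        _ = (f * b) * (a * bd) := by rw [e_bd, n_eq]
        _ = f * ((b * a) * bd) := by simp only [mul_assoc]
        _ = f * ((μ⁻¹ • (a * b)) * bd) := by rw [hba]
        _ = μ⁻¹ • (f * (a * (b * bd))) := by
            rw [smul_mul_assoc, mul_smul_comm]; simp only [mul_assoc]
        _ = μ⁻¹ • (f * (a * e)) := by rw [← he]
    calc f * (a * e) = μ • (μ⁻¹ • (f * (a * e))) := by
          rw [smul_smul, mul_inv_cancel₀ hμ, one_smul]
      _ = μ • (n * (f * (a * e)) * bd) := by rw [step]
  -- y := (e * a) * f is zero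
  have hy0 : (e * a) * f = 0 := by
    refine sandwich_right (μ := μ⁻¹) (w := bd) hqn ?_
    have step : bd * ((e * a) * f) * n = μ • ((e * a) * f) := by
      calc bd * ((e * a) * f) * n = ((bd * e) * a) * (f * n) := by simp only [mul_assoc]
        _ = (bd * a) * n := by rw [bd_e, fn]
        _ = (bd * a) * (b * f) := by rw [← nb]
        _ = bd * ((a * b) * f) := by simp only [mul_assoc]
        _ = bd * ((μ • (b * a)) * f) := by rw [h]
        _ = μ • (((bd * b) * a) * f) := by
            rw [smul_mul_assoc, mul_smul_comm]; simp only [mul_assoc]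
        _ = μ • ((e * a) * f) := by rw [bdb_e]
    calc (e * a) * f = μ⁻¹ • (μ • ((e * a) * f)) := by
          rw [smul_smul, inv_mul_cancel₀ hμ, one_smul]
      _ = μ⁻¹ • (bd * ((e * a) * f) * n) := by rw [step]
  have hae : a * e = e * a := by
    have h1 : a * e = e * (a * e) := by
      have := hx0
      rw [hf, sub_mul, one_mul, sub_eq_zero] at this
      exact this
    have h2 : e * a = e * (a * e) := by
      have := hy0
      rw [hf, mul_sub, mul_one, sub_eq_zero] at this
      rw [this, mul_assoc]
    rw [h1, h2]
  calc bd * a = (bd * e) * a := by rw [bd_e]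
    _ = bd * (a * e) := by rw [mul_assoc, hae]
    _ = bd * ((a * b) * bd) := by rw [he]; simp only [mul_assoc]
    _ = bd * ((μ • (b * a)) * bd) := by rw [h]
    _ = μ • (((bd * b) * a) * bd) := by
        rw [smul_mul_assoc, mul_smul_comm]; simp only [mul_assoc]
    _ = μ • ((a * e) * bd) := by rw [bdb_e, hae]
    _ = μ • (a * bd) := by rw [mul_assoc, e_bd]

end Key
theorem stmt14 {A : Type*} [NormedRing A] [NormedAlgebra ℂ A] [CompleteSpace A]
    (a ad b bd : A) (ha : IsPDrazinInv a ad) (hb : IsPDrazinInv b bd)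
    (lam : ℂ) (hlam : lam ≠ 0) (h : a * b = lam • (b * a)) :
    IsPDrazinInv (a * b) (bd * ad) ∧ bd * ad = lam⁻¹ • (ad * bd) := by
  have ha1 : a * ad = ad * a := ha.1
  have ha2 : ad * a * ad = ad := ha.2.1
  obtain ⟨ka, hka, hJa⟩ := ha.2.2
  have hb1 : b * bd = bd * b := hb.1
  have hb2 : bd * b * bd = bd := hb.2.1
  obtain ⟨kb, hkb, hJb⟩ := hb.2.2
  have hlam' : (lam⁻¹ : ℂ) ≠ 0 := inv_ne_zero hlam
  have L1 : bd * a = lam • (a * bd) := key_commute hlam hb h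
  have hba : b * a = lam⁻¹ • (a * b) := by
    rw [h, smul_smul, inv_mul_cancel₀ hlam, one_smul]
  have L2 : ad * b = lam⁻¹ • (b * ad) := key_commute hlam' ha hba
  have L3 : bd * ad = lam⁻¹ • (ad * bd) := key_commute hlam' hb L2
  have hbad : b * ad = lam • (ad * b) := by
    rw [L2, smul_smul, mul_inv_cancel₀ hlam, one_smul]
  have hadbd : ad * bd = lam • (bd * ad) := by
    rw [L3, smul_smul, mul_inv_cancel₀ hlam, one_smul]
  -- helper swap lemmas in right-associated form
  have hsw_ad_a : ∀ z : A, ad * (a * z) = a * (ad * z) := fun z => by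
    rw [← mul_assoc, ← ha1, mul_assoc]
  have hsw_bd_a : ∀ z : A, bd * (a * z) = lam • (a * (bd * z)) := fun z => by
    rw [← mul_assoc, L1, smul_mul_assoc, mul_assoc]
  have hsw_a_bd : ∀ z : A, a * (bd * z) = lam⁻¹ • (bd * (a * z)) := fun z => by
    rw [hsw_bd_a, smul_smul, inv_mul_cancel₀ hlam, one_smul]
  have hsw_ad_b : ∀ z : A, ad * (b * z) = lam⁻¹ • (b * (ad * z)) := fun z => by
    rw [← mul_assoc, L2, smul_mul_assoc, mul_assoc]
  have hsw_ad_bd : ∀ z : A, ad * (bd * z) = lam • (bd * (ad * z)) := fun z => by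
    rw [← mul_assoc, hadbd, smul_mul_assoc, mul_assoc]
  have hb2' : ∀ z : A, bd * (b * (bd * z)) = bd * z := fun z => by
    rw [← mul_assoc, ← mul_assoc, hb2]
  have haad : a * (ad * ad) = ad := by
    rw [← mul_assoc, ha1, ha2]
  -- commutation of the product with bd * ad
  have g1 : (bd * ad) * (a * b) = a * (b * (bd * ad)) := by
    calc (bd * ad) * (a * b) = bd * (ad * (a * b)) := by simp only [mul_assoc]
      _ = bd * (a * (ad * b)) := by rw [hsw_ad_a]
      _ = lam • (a * (bd * (ad * b))) := by rw [hsw_bd_a]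
      _ = lam • (a * (bd * (lam⁻¹ • (b * ad)))) := by rw [L2]
      _ = (lam * lam⁻¹) • (a * (bd * (b * ad))) := by
          rw [mul_smul_comm, mul_smul_comm, smul_smul]
      _ = a * (bd * (b * ad)) := by rw [mul_inv_cancel₀ hlam, one_smul]
      _ = a * ((bd * b) * ad) := by rw [mul_assoc]
      _ = a * ((b * bd) * ad) := by rw [hb1]
      _ = a * (b * (bd * ad)) := by rw [mul_assoc]
  have g2 : ((bd * ad) * (a * b)) * (bd * ad) = bd * ad := by
    calc ((bd * ad) * (a * b)) * (bd * ad)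
        = bd * (ad * (a * (b * (bd * ad)))) := by simp only [mul_assoc]
      _ = bd * (a * (ad * (b * (bd * ad)))) := by rw [hsw_ad_a]
      _ = lam • (a * (bd * (ad * (b * (bd * ad))))) := by rw [hsw_bd_a]
      _ = lam • (a * (bd * (lam⁻¹ • (b * (ad * (bd * ad)))))) := by rw [hsw_ad_b]
      _ = (lam * lam⁻¹) • (a * (bd * (b * (ad * (bd * ad))))) := by
          rw [mul_smul_comm, mul_smul_comm, smul_smul]
      _ = a * (bd * (b * (ad * (bd * ad)))) := by rw [mul_inv_cancel₀ hlam, one_smul]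
      _ = a * (bd * (b * (lam • (bd * (ad * ad))))) := by rw [hsw_ad_bd]
      _ = lam • (a * (bd * (b * (bd * (ad * ad))))) := by
          rw [mul_smul_comm, mul_smul_comm, mul_smul_comm]
      _ = lam • (a * (bd * (ad * ad))) := by rw [hb2']
      _ = lam • (lam⁻¹ • (bd * (a * (ad * ad)))) := by rw [hsw_a_bd]
      _ = bd * (a * (ad * ad)) := by rw [smul_smul, mul_inv_cancel₀ hlam, one_smul]
      _ = bd * ad := by rw [haad]
  -- commutation of a*ad with b and of b*bd with ad
  have hp_b : (a * ad) * b = b * (a * ad) := by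
    calc (a * ad) * b = a * (ad * b) := by rw [mul_assoc]
      _ = a * (lam⁻¹ • (b * ad)) := by rw [L2]
      _ = lam⁻¹ • ((a * b) * ad) := by rw [mul_smul_comm, mul_assoc]
      _ = lam⁻¹ • ((lam • (b * a)) * ad) := by rw [h]
      _ = (lam⁻¹ * lam) • (b * (a * ad)) := by rw [smul_mul_assoc, smul_smul, mul_assoc]
      _ = b * (a * ad) := by rw [inv_mul_cancel₀ hlam, one_smul]
  have hq_ad : ad * (b * bd) = (b * bd) * ad := by
    calc ad * (b * bd) = lam⁻¹ • (b * (ad * bd)) := by rw [hsw_ad_b]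
      _ = lam⁻¹ • (b * (lam • (bd * ad))) := by rw [hadbd]
      _ = (lam⁻¹ * lam) • ((b * bd) * ad) := by rw [mul_smul_comm, smul_smul, mul_assoc]
      _ = (b * bd) * ad := by rw [inv_mul_cancel₀ hlam, one_smul]
  have hp_bk : ∀ j : ℕ, (a * ad) * b ^ j = b ^ j * (a * ad) := by
    intro j
    exact ((Commute.pow_right (hp_b) j)).eq
  -- power commutation
  have hpow_ba : ∀ j : ℕ, b * a ^ j = ((lam⁻¹) ^ j) • (a ^ j * b) := by
    intro j
    induction j with
    | zero => simp
    | succ j ih =>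
      calc b * a ^ (j + 1) = (b * a ^ j) * a := by rw [pow_succ, mul_assoc]
        _ = ((lam⁻¹) ^ j) • ((a ^ j * b) * a) := by rw [ih, smul_mul_assoc]
        _ = ((lam⁻¹) ^ j) • (a ^ j * (b * a)) := by rw [mul_assoc]
        _ = ((lam⁻¹) ^ j) • (a ^ j * (lam⁻¹ • (a * b))) := by rw [hba]
        _ = ((lam⁻¹) ^ (j + 1)) • (a ^ (j + 1) * b) := by
            rw [mul_smul_comm, smul_smul, ← pow_succ, ← mul_assoc, ← pow_succ]
  have hprod_pow : ∀ j : ℕ, ∃ μ : ℂ, μ ≠ 0 ∧ (a * b) ^ j = μ • (a ^ j * b ^ j) := by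
    intro j
    induction j with
    | zero => exact ⟨1, one_ne_zero, by simp⟩
    | succ j ih =>
      obtain ⟨μ, hμ0, hμe⟩ := ih
      refine ⟨μ * (lam⁻¹) ^ j, mul_ne_zero hμ0 (pow_ne_zero _ hlam'), ?_⟩
      calc (a * b) ^ (j + 1) = (a * b) * (a * b) ^ j := by rw [pow_succ']
        _ = (a * b) * (μ • (a ^ j * b ^ j)) := by rw [hμe]
        _ = μ • (a * ((b * a ^ j) * b ^ j)) := by
            rw [mul_smul_comm]; simp only [mul_assoc]
        _ = μ • (a * ((((lam⁻¹) ^ j) • (a ^ j * b)) * b ^ j)) := by rw [hpow_ba]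
        _ = (μ * (lam⁻¹) ^ j) • (a * (a ^ j * (b * b ^ j))) := by
            rw [smul_mul_assoc, mul_smul_comm, smul_smul]; simp only [mul_assoc]
        _ = (μ * (lam⁻¹) ^ j) • (a ^ (j + 1) * b ^ (j + 1)) := by
            rw [← mul_assoc, ← pow_succ', ← pow_succ']
  -- the Jacobson radical condition
  obtain ⟨μ, hμ0, hμe⟩ := hprod_pow (ka + kb)
  have hprod : (a * b) * (bd * ad) = (a * ad) * (b * bd) := by
    calc (a * b) * (bd * ad) = a * ((b * bd) * ad) := by simp only [mul_assoc]
      _ = a * (ad * (b * bd)) := by rw [← hq_ad]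
      _ = (a * ad) * (b * bd) := by rw [mul_assoc]
  have hJmain : MemJacobson ((a * b) ^ (ka + kb) - (a * b) ^ (ka + kb + 1) * (bd * ad)) := by
    have E1 : (a * b) ^ (ka + kb) - (a * b) ^ (ka + kb + 1) * (bd * ad)
        = (a * b) ^ (ka + kb) * (1 - a * ad)
          + (a * b) ^ (ka + kb) * ((a * ad) * (1 - b * bd)) := by
      rw [pow_succ, mul_assoc, hprod]
      noncomm_ring
    rw [E1]
    apply memJ_add
    · -- first piece
      have e1 : (a * b) ^ (ka + kb) * (1 - a * ad)
          = μ • (a ^ kb * ((a ^ ka - a ^ (ka + 1) * ad) * b ^ (ka + kb))) := by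
        rw [hμe, smul_mul_assoc]
        congr 1
        have c1 : b ^ (ka + kb) * (1 - a * ad) = (1 - a * ad) * b ^ (ka + kb) := by
          rw [mul_sub, sub_mul, mul_one, one_mul, ← hp_bk]
        have c2 : a ^ (ka + kb) * (1 - a * ad)
            = a ^ kb * (a ^ ka - a ^ (ka + 1) * ad) := by
          rw [mul_sub, mul_sub, mul_one]
          congr 1
          · rw [← pow_add, Nat.add_comm]
          · rw [← mul_assoc, ← mul_assoc, ← pow_succ, ← pow_add]
            congr 2
            omega
        calc (a ^ (ka + kb) * b ^ (ka + kb)) * (1 - a * ad)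
            = a ^ (ka + kb) * ((1 - a * ad) * b ^ (ka + kb)) := by
              rw [mul_assoc, c1]
          _ = (a ^ (ka + kb) * (1 - a * ad)) * b ^ (ka + kb) := by rw [mul_assoc]
          _ = (a ^ kb * (a ^ ka - a ^ (ka + 1) * ad)) * b ^ (ka + kb) := by rw [c2]
          _ = a ^ kb * ((a ^ ka - a ^ (ka + 1) * ad) * b ^ (ka + kb)) := by
              rw [mul_assoc]
      rw [e1]
      exact memJ_smul _ (memJ_mul_left _ (memJ_mul_right _ hJa))
    · -- second piece
      have e2 : (a * b) ^ (ka + kb) * ((a * ad) * (1 - b * bd))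
          = μ • (a ^ (ka + kb) * ((a * ad) * (b ^ ka * (b ^ kb - b ^ (kb + 1) * bd)))) := by
        rw [hμe, smul_mul_assoc]
        congr 1
        have c3 : b ^ (ka + kb) * (1 - b * bd)
            = b ^ ka * (b ^ kb - b ^ (kb + 1) * bd) := by
          rw [mul_sub, mul_sub, mul_one]
          congr 1
          · rw [← pow_add]
          · rw [← mul_assoc, ← mul_assoc, ← pow_succ, ← pow_add, ← Nat.add_assoc]
        calc (a ^ (ka + kb) * b ^ (ka + kb)) * ((a * ad) * (1 - b * bd))
            = a ^ (ka + kb) * ((b ^ (ka + kb) * (a * ad)) * (1 - b * bd)) := by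
              simp only [mul_assoc]
          _ = a ^ (ka + kb) * (((a * ad) * b ^ (ka + kb)) * (1 - b * bd)) := by
              rw [← hp_bk]
          _ = a ^ (ka + kb) * ((a * ad) * (b ^ (ka + kb) * (1 - b * bd))) := by
              simp only [mul_assoc]
          _ = a ^ (ka + kb) * ((a * ad) * (b ^ ka * (b ^ kb - b ^ (kb + 1) * bd))) := by
              rw [c3]
      rw [e2]
      exact memJ_smul _ (memJ_mul_left _ (memJ_mul_left _ (memJ_mul_left _ hJb)))
  refine ⟨⟨?_, ?_, ka + kb, by omega, hJmain⟩, L3⟩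
  · rw [g1]; simp only [mul_assoc]
  · rw [g2]
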